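/- Let A be the free commutative associative n-ary algebra on one generator x, whose homogeneous component of degree k is one-dimensional if k ≡ 1 mod (n-1) and zero otherwise, so H(A,t) = t/(1-t^{n-1}). Then the generating function of the reduced Gröbner basis of the defining ideal J (with respect to any admissible ordering) is G(B(J),t) = (t/(1-t^{n-1}))^n - t/(1-t^{n-1}) + t = t^n·Σ_{m≥1}(binom(m+n-1, n-1) - 1)·t^{(n-1)m}. -/

import Mathlib

open PowerSeries

noncomputable def Wser (m d : ℕ) : PowerSeries ℚ :=
  PowerSeries.mk (fun k => if m ∣ k then (Nat.choose (k / m + d) d : ℚ) else 0)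

lemma coeff_one_sub_Xpow_mul (m k : ℕ) (f : PowerSeries ℚ) :
    PowerSeries.coeff k ((1 - PowerSeries.X ^ m) * f)
      = PowerSeries.coeff k f
        - if m ≤ k then PowerSeries.coeff (k - m) f else 0 := by
  rw [sub_mul, one_mul, map_sub, PowerSeries.coeff_X_pow_mul']

lemma Wser_zero_mul (m : ℕ) (hm : 1 ≤ m) :
    (1 - PowerSeries.X ^ m) * Wser m 0 = 1 := by
  ext k
  rw [coeff_one_sub_Xpow_mul]
  simp only [Wser, PowerSeries.coeff_mk, Nat.choose_zero_right, Nat.cast_one,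
    PowerSeries.coeff_one]
  by_cases hk : k = 0
  · subst hk
    rw [if_pos (dvd_zero m), if_neg (by omega : ¬ m ≤ 0), if_pos rfl, sub_zero]
  · rw [if_neg hk]
    by_cases hle : m ≤ k
    · have hiff : m ∣ k ↔ m ∣ k - m := by
        constructor
        · intro h; exact Nat.dvd_sub h dvd_rfl
        · intro h
          have h2 := Nat.dvd_add h (dvd_refl m)
          rwa [Nat.sub_add_cancel hle] at h2
      rw [if_pos hle]
      by_cases hd : m ∣ k
      · rw [if_pos hd, if_pos (hiff.mp hd), sub_self]
      · rw [if_neg hd, if_neg (fun h => hd (hiff.mpr h)), sub_zero]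
    · rw [if_neg hle, if_neg (fun hd => hle (Nat.le_of_dvd (by omega) hd)), sub_zero]

lemma Wser_succ_mul (m d : ℕ) (hm : 1 ≤ m) :
    (1 - PowerSeries.X ^ m) * Wser m (d + 1) = Wser m d := by
  have hm0 : 0 < m := hm
  ext k
  rw [coeff_one_sub_Xpow_mul]
  simp only [Wser, PowerSeries.coeff_mk]
  by_cases hd : m ∣ k
  · obtain ⟨q, rfl⟩ := hd
    rcases q with _ | q
    · simp only [Nat.mul_zero]
      rw [if_pos (dvd_zero m), if_neg (by omega : ¬ m ≤ 0), if_pos (dvd_zero m),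
        Nat.zero_div, sub_zero, Nat.zero_add, Nat.zero_add, Nat.choose_self,
        Nat.choose_self]
    · have hle : m ≤ m * (q + 1) := Nat.le_mul_of_pos_right m (by omega)
      have hsub : m * (q + 1) - m = m * q := by
        rw [Nat.mul_succ, Nat.add_sub_cancel]
      rw [if_pos ⟨q + 1, rfl⟩, if_pos hle, hsub, if_pos ⟨q, rfl⟩,
        if_pos ⟨q + 1, rfl⟩, Nat.mul_div_cancel_left _ hm0,
        Nat.mul_div_cancel_left _ hm0]
      simp only [show q + 1 + (d + 1) = (q + d + 1) + 1 from by omega,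
        show q + (d + 1) = q + d + 1 from by omega,
        show q + 1 + d = q + d + 1 from by omega]
      rw [Nat.choose_succ_succ]
      push_cast
      ring
  · rw [if_neg hd, if_neg hd]
    by_cases hle : m ≤ k
    · rw [if_pos hle, if_neg (fun h => hd (by
        have h2 := Nat.dvd_add h (dvd_refl m)
        rwa [Nat.sub_add_cancel hle] at h2)), sub_zero]
    · rw [if_neg hle, sub_zero]

lemma Wser_inv (m d : ℕ) (hm : 1 ≤ m) :
    (1 - PowerSeries.X ^ m) ^ (d + 1) * Wser m d = 1 := by
  induction d with
  | zero => simpa using Wser_zero_mul m hm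
  | succ d ih =>
      have h1 : (1 - PowerSeries.X ^ m) ^ (d + 1 + 1) * Wser m (d + 1)
          = (1 - PowerSeries.X ^ m) ^ (d + 1)
            * ((1 - PowerSeries.X ^ m) * Wser m (d + 1)) := by
        rw [pow_succ]; ring
      rw [h1, Wser_succ_mul m d hm]
      exact ih

/-- The generating function of the reduced Gröbner basis of the defining ideal of
the free commutative associative `n`-ary algebra on one generator:
`(t/(1-t^{n-1}))^n - t/(1-t^{n-1}) + t = t^n · Σ_{m≥0} (binom(m+n-1,n-1)-1) t^{(n-1)m}`. -/
theorem stmt_16 (n : ℕ) (hn : 2 ≤ n) :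
    (PowerSeries.X * (1 - PowerSeries.X ^ (n - 1) : PowerSeries ℚ)⁻¹) ^ n
      - PowerSeries.X * (1 - PowerSeries.X ^ (n - 1) : PowerSeries ℚ)⁻¹
      + PowerSeries.X
    = PowerSeries.X ^ n * PowerSeries.mk (fun k =>
        if (n - 1) ∣ k then (Nat.choose (k / (n - 1) + n - 1) (n - 1) : ℚ) - 1
        else 0) := by
  obtain ⟨m, rfl⟩ : ∃ m, n = m + 1 := ⟨n - 1, by omega⟩
  have hm : 1 ≤ m := by omega
  simp only [Nat.add_sub_cancel]
  simp only [show ∀ a : ℕ, a + (m + 1) - 1 = a + m from fun a => by omega]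
  set u : PowerSeries ℚ := 1 - PowerSeries.X ^ m with hu
  have hS : (PowerSeries.mk (fun k =>
      if m ∣ k then (Nat.choose (k / m + m) m : ℚ) - 1 else 0))
      = Wser m m - Wser m 0 := by
    ext k
    simp only [map_sub, PowerSeries.coeff_mk, Wser, Nat.choose_zero_right,
      Nat.cast_one]
    split_ifs with h <;> simp
  rw [hS]
  have hu0 : PowerSeries.constantCoeff u = 1 := by
    simp [hu, zero_pow (by omega : m ≠ 0)]
  have hune : u ≠ 0 := fun h => by simp [h] at hu0
  have hinv : u⁻¹ * u = 1 :=
    PowerSeries.inv_mul_cancel u (by rw [hu0]; exact one_ne_zero)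
  apply mul_right_cancel₀ (pow_ne_zero (m + 1) hune)
  have e1 : (PowerSeries.X * u⁻¹) ^ (m + 1) * u ^ (m + 1)
      = PowerSeries.X ^ (m + 1) := by
    rw [← mul_pow, mul_assoc, hinv, mul_one]
  have e2 : u⁻¹ * u ^ (m + 1) = u ^ m := by
    rw [pow_succ', ← mul_assoc, hinv, one_mul]
  have e3 : Wser m 0 * u ^ (m + 1) = u ^ m := by
    rw [pow_succ', ← mul_assoc, mul_comm (Wser m 0) u, Wser_zero_mul m hm, one_mul]
  have e4 : Wser m m * u ^ (m + 1) = 1 := by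
    rw [mul_comm]; exact Wser_inv m m hm
  rw [add_mul, sub_mul, e1, mul_assoc PowerSeries.X u⁻¹, e2,
    mul_assoc (PowerSeries.X ^ (m + 1)), sub_mul, e3, e4]
  rw [hu]
  ring
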